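/- arXiv:cs/0610071 — 6 statements merged into one kernel-verified Lean document; each statement's English description precedes it below -/
import Mathlib

section
/- If ∼ is an equivalence relation with finite equivalence classes on a set T, ▷ is a well-founded relation on T, and for each n, (∼▷)ⁿ ⊆ ∼(▷ⁿ) (proved by induction using ∼∼ = ∼ and ▷∼ ⊆ ∼▷), then the relation ∼▷ (the composition: t (∼▷) u iff there exists w with t ∼ w and w ▷ u) is well-founded. -/
def Comp {T : Type*} (r s : T → T → Prop) : T → T → Prop :=
  fun a b => ∃ c, r a c ∧ s c b

def RelPow {T : Type*} (r : T → T → Prop) : ℕ → T → T → Prop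
  | 0 => Eq
  | n + 1 => Comp r (RelPow r n)

/-- If `∼` is an equivalence relation with finite equivalence classes, `▷` is a
well-founded relation satisfying the commutation `▷∼ ⊆ ∼▷`, and for each `n`,
`(∼▷)ⁿ ⊆ ∼(▷ⁿ)`, then the composition `∼▷` is well-founded (strongly normalizing). -/
theorem stmt1 {T : Type*} (sim rhd : T → T → Prop)
    (hequiv : Equivalence sim)
    (hfin : ∀ t : T, {u | sim t u}.Finite)
    (hwf : WellFounded (fun a b => rhd b a))
    (hcomm : ∀ t u v : T, rhd t u → sim u v → ∃ w, sim t w ∧ rhd w v)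
    (hpow : ∀ n : ℕ, ∀ a b : T, RelPow (Comp sim rhd) n a b → Comp sim (RelPow rhd n) a b) :
    WellFounded (fun a b => Comp sim rhd b a) := by
  classical
  -- rank with respect to ▷
  -- measure: max rank over the (finite, nonempty) equivalence class
  have hne : ∀ t : T, ((hfin t).toFinset.image (fun t => (hwf.apply t).rank)).Nonempty := by
    intro t
    exact ⟨(hwf.apply t).rank, Finset.mem_image_of_mem _ ((hfin t).mem_toFinset.2 (hequiv.refl t))⟩
  set ρ : T → Ordinal := fun t => ((hfin t).toFinset.image (fun t => (hwf.apply t).rank)).max' (hne t) with hρ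
  have hle : ∀ t u : T, sim t u → (hwf.apply u).rank ≤ ρ t := by
    intro t u h
    exact Finset.le_max' _ _ (Finset.mem_image_of_mem (fun t => (hwf.apply t).rank) ((hfin t).mem_toFinset.2 h))
  have hattain : ∀ t : T, ∃ u, sim t u ∧ (hwf.apply u).rank = ρ t := by
    intro t
    obtain ⟨u, hu, hru⟩ := Finset.mem_image.1 (((hfin t).toFinset.image (fun t => (hwf.apply t).rank)).max'_mem (hne t))
    exact ⟨u, (hfin t).mem_toFinset.1 hu, hru⟩
  have hdec : ∀ a b : T, Comp sim rhd b a → ρ a < ρ b := by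
    intro a b ⟨c, hbc, hca⟩
    obtain ⟨u, hau, hru⟩ := hattain a
    obtain ⟨w, hcw, hwu⟩ := hcomm c a u hca hau
    have hbw : sim b w := hequiv.trans hbc hcw
    calc ρ a = (hwf.apply u).rank := hru.symm
      _ < (hwf.apply w).rank := Acc.rank_lt_of_rel (hwf.apply w) hwu
      _ ≤ ρ b := hle b w hbw
  exact Subrelation.wf (fun {a b} h => hdec a b h) (InvImage.wf ρ Ordinal.lt_wf)
end

section
/- Let R be a relation and ∼ an equivalence relation on a type T. If R is ∼-confluent on ∼-classes (i.e., (R*)⁻¹ ∘ ∼ ∘ R* ⊆ R* ∘ ∼ ∘ (R*)⁻¹), then the relation ∼R (composition: a (∼R) b iff ∃c, a ∼ c ∧ c R b) is also ∼-confluent on ∼-classes. -/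
/-- `∼`-confluence on `∼`-classes of a relation `X`. -/
def SimConflOnClasses {T : Type*} (sim X : T → T → Prop) : Prop :=
  ∀ x y y' z : T,
    Relation.ReflTransGen X y x → sim y y' → Relation.ReflTransGen X y' z →
    ∃ w w', Relation.ReflTransGen X x w ∧ sim w w' ∧ Relation.ReflTransGen X z w'

section Aux

variable {T : Type*} {R sim : T → T → Prop}

/-- The union relation `R ∪ ∼`. -/
private def QU (R sim : T → T → Prop) : T → T → Prop := fun a b => R a b ∨ sim a b

private lemma R_subset_QU {a b : T} (h : Relation.ReflTransGen R a b) :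
    Relation.ReflTransGen (QU R sim) a b :=
  Relation.ReflTransGen.mono (p := QU R sim) (fun _ _ hr => Or.inl hr) _ _ h

/-- Semi-confluence: a `Q*`-reduct and an `R*`-reduct of `a` can be joined,
with pure `R*`-steps on the `Q`-side's end. -/
private lemma semiconf (hequiv : Equivalence sim) (hconf : SimConflOnClasses sim R)
    {a c : T} (h : Relation.ReflTransGen (QU R sim) a c) :
    ∀ b, Relation.ReflTransGen R a b →
      ∃ d, Relation.ReflTransGen (QU R sim) b d ∧ Relation.ReflTransGen R c d := by
  induction h with
  | refl => exact fun b hb => ⟨b, Relation.ReflTransGen.refl, hb⟩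
  | @tail c x _ hcx ih =>
    intro b hb
    obtain ⟨d, hbd, hcd⟩ := ih b hb
    have key : ∃ w w', Relation.ReflTransGen R d w ∧ sim w w' ∧
        Relation.ReflTransGen R x w' := by
      rcases hcx with hR | hsim
      · exact hconf d c c x hcd (hequiv.refl c) (Relation.ReflTransGen.single hR)
      · exact hconf d c x x hcd hsim Relation.ReflTransGen.refl
    obtain ⟨w, w', hdw, hww', hxw'⟩ := key
    exact ⟨w', hbd.trans ((R_subset_QU hdw).tail (Or.inr hww')), hxw'⟩

/-- Confluence of `Q*`. -/
private lemma QU_confluent (hequiv : Equivalence sim) (hconf : SimConflOnClasses sim R)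
    {a b : T} (hab : Relation.ReflTransGen (QU R sim) a b) :
    ∀ c, Relation.ReflTransGen (QU R sim) a c →
      ∃ d, Relation.ReflTransGen (QU R sim) b d ∧ Relation.ReflTransGen (QU R sim) c d := by
  induction hab with
  | refl => exact fun c hc => ⟨c, hc, Relation.ReflTransGen.refl⟩
  | @tail b₀ b _ hb₀b ih =>
    intro c hc
    obtain ⟨d, hb₀d, hcd⟩ := ih c hc
    rcases hb₀b with hR | hsim
    · obtain ⟨e, hbe, hde⟩ :=
        semiconf hequiv hconf hb₀d b (Relation.ReflTransGen.single hR)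
      exact ⟨e, hbe, hcd.trans (R_subset_QU hde)⟩
    · exact ⟨d, (Relation.ReflTransGen.single (show QU R sim b b₀ from Or.inr (hequiv.symm hsim))).trans hb₀d, hcd⟩

/-- `(∼R)* ⊆ Q*`. -/
private lemma compRT_subset_QU {a b : T}
    (h : Relation.ReflTransGen (Comp sim R) a b) :
    Relation.ReflTransGen (QU R sim) a b := by
  induction h with
  | refl => exact Relation.ReflTransGen.refl
  | tail _ hstep ih =>
    obtain ⟨c, hsim, hR⟩ := hstep
    exact (ih.tail (Or.inr hsim)).tail (Or.inl hR)

/-- `Q* ⊆ (∼R)* ∘ ∼`. -/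
private lemma QU_subset_compRT (hequiv : Equivalence sim) {a b : T}
    (h : Relation.ReflTransGen (QU R sim) a b) :
    ∃ c, Relation.ReflTransGen (Comp sim R) a c ∧ sim c b := by
  induction h with
  | refl => exact ⟨a, Relation.ReflTransGen.refl, hequiv.refl a⟩
  | @tail b x _ hstep ih =>
    obtain ⟨c, hac, hcb⟩ := ih
    rcases hstep with hR | hsim
    · exact ⟨x, hac.tail ⟨b, hcb, hR⟩, hequiv.refl x⟩
    · exact ⟨c, hac, hequiv.trans hcb hsim⟩

end Aux

/-- If `R` is `∼`-confluent on `∼`-classes then so is `∼R`. -/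
theorem stmt3 {T : Type*} (R sim : T → T → Prop)
    (hequiv : Equivalence sim)
    (hconf : SimConflOnClasses sim R) :
    SimConflOnClasses sim (Comp sim R) := by
  intro x y y' z hyx hyy' hy'z
  have hQyx : Relation.ReflTransGen (QU R sim) y x := compRT_subset_QU hyx
  have hQyz : Relation.ReflTransGen (QU R sim) y z :=
    (Relation.ReflTransGen.single (show QU R sim y y' from Or.inr hyy')).trans (compRT_subset_QU hy'z)
  obtain ⟨d, hxd, hzd⟩ := QU_confluent hequiv hconf hQyx z hQyz
  obtain ⟨w, hxw, hwd⟩ := QU_subset_compRT hequiv hxd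
  obtain ⟨w', hzw', hw'd⟩ := QU_subset_compRT hequiv hzd
  exact ⟨w, w', hxw, hequiv.trans hwd (hequiv.symm hw'd), hzw'⟩
end

section
/- Let β and ∼ be relations on a type T with ∼ transitive and reflexive such that ∼∘β ⊆ β∘∼. If a term t is strongly normalizing for β, then t is strongly normalizing for the composed relation ∼β (where a (∼β) b iff ∃c, a ∼ c ∧ c β b). (Proof idea: show (∼β)ⁿ ⊆ βⁿ∘∼ by induction on n.) -/
/-- If `∼` is reflexive and transitive with `∼∘β ⊆ β∘∼`, and `t` is strongly
normalizing for `β`, then `t` is strongly normalizing for `∼β`.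
(Strong normalization of `t` for `R` = accessibility of `t` for the inverse of `R`.) -/
theorem stmt5 {T : Type*} (β sim : T → T → Prop)
    (hrefl : ∀ t : T, sim t t)
    (htrans : ∀ t u v : T, sim t u → sim u v → sim t v)
    (hcomm : ∀ t u v : T, sim t u → β u v → ∃ w, β t w ∧ sim w v)
    (t : T) (hsn : Acc (fun a b => β b a) t) :
    Acc (fun a b => Comp sim β b a) t := by
  have key : ∀ t, Acc (fun a b => β b a) t → ∀ u, sim t u →
      Acc (fun a b => Comp sim β b a) u := by
    intro t h
    induction h with
    | intro x _ ih =>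
      intro u hxu
      constructor
      intro v ⟨c, huc, hcv⟩
      obtain ⟨w, hxw, hwv⟩ := hcomm x c v (htrans x u c hxu huc) hcv
      exact ih w hxw v hwv
  exact key t hsn t (hrefl t)
end

section
/- Let ▷ be a relation on a type T and ∼ a decidable equivalence relation with finite equivalence classes. Suppose ▷ is weakly normalizing and finitely branching, so there is a function nf : T → T computing a ▷-normal form with t ▷* nf(t) and nf(t) in ▷-normal form. If ▷ is ∼-confluent on ∼-classes, then for all t, u: t (▷* ∘ ∼ ∘ (▷*)⁻¹) u (i.e., t and u have ▷-reducts that are ∼-equivalent) if and only if nf(t) ∼ nf(u). Consequently, joinability modulo ∼ is decidable. -/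
/-- Let `▷` be a relation and `∼` a decidable equivalence with finite classes.
Suppose `nf` computes a `▷`-normal form of every term. If `▷` is `∼`-confluent on
`∼`-classes, then `t` and `u` are joinable modulo `∼` iff `nf t ∼ nf u`; hence
joinability modulo `∼` is decidable. -/
theorem stmt7 {T : Type*} (rhd sim : T → T → Prop)
    (hequiv : Equivalence sim)
    (hdec : DecidableRel sim)
    (hfin : ∀ t : T, {u | sim t u}.Finite)
    (hfb : ∀ t : T, {u | rhd t u}.Finite)
    (nf : T → T)
    (hnf₁ : ∀ t : T, Relation.ReflTransGen rhd t (nf t))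
    (hnf₂ : ∀ t : T, ∀ v, ¬ rhd (nf t) v)
    (hconf : ∀ u t u' v : T, Relation.ReflTransGen rhd u t → sim u u' →
      Relation.ReflTransGen rhd u' v →
      ∃ w w', Relation.ReflTransGen rhd t w ∧ sim w w' ∧ Relation.ReflTransGen rhd v w') :
    (∀ t u : T,
      (∃ t' u', Relation.ReflTransGen rhd t t' ∧ sim t' u' ∧ Relation.ReflTransGen rhd u u')
        ↔ sim (nf t) (nf u)) ∧
    Nonempty (DecidableRel (fun t u : T =>
      ∃ t' u', Relation.ReflTransGen rhd t t' ∧ sim t' u' ∧ Relation.ReflTransGen rhd u u')) := by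
  -- any reduct of a normal form is itself
  have hstuck : ∀ t w, Relation.ReflTransGen rhd (nf t) w → w = nf t := by
    intro t w h
    rcases Relation.ReflTransGen.cases_head h with rfl | ⟨b, hb, -⟩
    · rfl
    · exact absurd hb (hnf₂ t b)
  -- key lemma: sim t u → sim (nf t) (nf u)
  have key : ∀ t u, sim t u → sim (nf t) (nf u) := by
    intro t u h
    obtain ⟨w, w', hw, hww', hw'⟩ := hconf t (nf t) u (nf u) (hnf₁ t) h (hnf₁ u)
    rwa [hstuck t w hw, hstuck u w' hw'] at hww'
  -- key lemma: t ▷* t' → sim (nf t) (nf t')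
  have red : ∀ t t', Relation.ReflTransGen rhd t t' → sim (nf t) (nf t') := by
    intro t t' h
    obtain ⟨w, w', hw, hww', hw'⟩ :=
      hconf t (nf t) t (nf t') (hnf₁ t) (hequiv.refl t) (h.trans (hnf₁ t'))
    rwa [hstuck t w hw, hstuck t' w' hw'] at hww'
  have main : ∀ t u : T,
      (∃ t' u', Relation.ReflTransGen rhd t t' ∧ sim t' u' ∧ Relation.ReflTransGen rhd u u')
        ↔ sim (nf t) (nf u) := by
    intro t u
    constructor
    · rintro ⟨t', u', ht', hsim, hu'⟩
      exact hequiv.trans (red t t' ht')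
        (hequiv.trans (key t' u' hsim) (hequiv.symm (red u u' hu')))
    · intro h
      exact ⟨nf t, nf u, hnf₁ t, h, hnf₁ u⟩
  refine ⟨main, ⟨fun t u => decidable_of_iff (sim (nf t) (nf u)) (main t u).symm⟩⟩
end

section
/- Let S = ∼∘R where ∼ is an equivalence relation and R a relation such that R ∼-commutes on ∼-classes (if y R x, y ∼ y', y' R z then ∃ w ∼ w' with x R w and z R w'). Then for all natural numbers p and n: (S⁻¹)ᵖ ∘ ∼ ∘ Sⁿ ⊆ Sⁿ ∘ ∼ ∘ (S⁻¹)ᵖ. In particular, taking arbitrary p and n, S* is ∼-confluent on ∼-classes. -/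
section Aux
variable {T : Type*} (R sim : T → T → Prop)

/-- absorb a sim on the left of a RelPow of S = sim∘R -/
lemma absorb_aux (hequiv : Equivalence sim) :
    ∀ n : ℕ, ∀ a b c : T, sim a b → RelPow (Comp sim R) n b c →
      ∃ c', RelPow (Comp sim R) n a c' ∧ sim c' c := by
  intro n
  cases n with
  | zero => intro a b c hab h; cases h; exact ⟨a, rfl, hab⟩
  | succ n =>
    rintro a b c hab ⟨d, ⟨e, hbe, hed⟩, hdc⟩
    exact ⟨c, ⟨d, ⟨e, hequiv.trans hab hbe, hed⟩, hdc⟩, hequiv.refl c⟩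

lemma one_step (hequiv : Equivalence sim)
    (hcomm : ∀ x y y' z : T, R y x → sim y y' → R y' z →
      ∃ w w', R x w ∧ sim w w' ∧ R z w') :
    ∀ x y y' z : T, Comp sim R y x → sim y y' → Comp sim R y' z →
      ∃ w w', Comp sim R x w ∧ sim w w' ∧ Comp sim R z w' := by
  rintro x y y' z ⟨c, hyc, hcx⟩ hyy' ⟨c', hy'c', hc'z⟩
  have hcc' : sim c c' :=
    hequiv.trans (hequiv.symm hyc) (hequiv.trans hyy' hy'c')
  obtain ⟨w, w', hxw, hww', hzw'⟩ := hcomm x c c' z hcx hcc' hc'z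
  exact ⟨w, w', ⟨x, hequiv.refl x, hxw⟩, hww', ⟨z, hequiv.refl z, hzw'⟩⟩

lemma strip (hequiv : Equivalence sim)
    (hcomm : ∀ x y y' z : T, R y x → sim y y' → R y' z →
      ∃ w w', R x w ∧ sim w w' ∧ R z w') :
    ∀ n : ℕ, ∀ x y y' z : T, Comp sim R y x → sim y y' →
      RelPow (Comp sim R) n y' z →
      ∃ w w', RelPow (Comp sim R) n x w ∧ sim w w' ∧ Comp sim R z w' := by
  intro n
  induction n with
  | zero =>
    rintro x y y' z hyx hyy' h
    cases h
    obtain ⟨c, hyc, hcx⟩ := hyx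
    exact ⟨x, x, rfl, hequiv.refl x,
      ⟨c, hequiv.trans (hequiv.symm hyy') hyc, hcx⟩⟩
  | succ n ih =>
    rintro x y y' z hyx hyy' ⟨c, hy'c, hcz⟩
    obtain ⟨w1, w1', hxw1, hw1, hcw1'⟩ :=
      one_step R sim hequiv hcomm x y y' c hyx hyy' hy'c
    obtain ⟨w2, w2', hw1'w2, hw2, hzw2'⟩ :=
      ih w1' c c z hcw1' (hequiv.refl c) hcz
    obtain ⟨c2, hw1c2, hc2w2⟩ := absorb_aux R sim hequiv n w1 w1' w2 hw1 hw1'w2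
    exact ⟨c2, w2', ⟨w1, hxw1, hw1c2⟩, hequiv.trans hc2w2 hw2, hzw2'⟩

lemma main_aux (hequiv : Equivalence sim)
    (hcomm : ∀ x y y' z : T, R y x → sim y y' → R y' z →
      ∃ w w', R x w ∧ sim w w' ∧ R z w') :
    ∀ p n : ℕ, ∀ x y y' z : T,
      RelPow (Comp sim R) p y x → sim y y' → RelPow (Comp sim R) n y' z →
      ∃ w w', RelPow (Comp sim R) n x w ∧ sim w w' ∧
        RelPow (Comp sim R) p z w' := by
  intro p
  induction p with
  | zero =>
    rintro n x y y' z hp hyy' hn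
    cases hp
    obtain ⟨w, hxw, hwz⟩ := absorb_aux R sim hequiv n x y' z hyy' hn
    exact ⟨w, z, hxw, hwz, rfl⟩
  | succ p ih =>
    rintro n x y y' z ⟨c, hyc, hcx⟩ hyy' hn
    obtain ⟨w1, w1', hcw1, hw1, hzw1'⟩ :=
      strip R sim hequiv hcomm n c y y' z hyc hyy' hn
    obtain ⟨w2, w2', hxw2, hw2, hw1w2'⟩ :=
      ih n x c c w1 hcx (hequiv.refl c) hcw1
    obtain ⟨c2, hw1'c2, hc2w2'⟩ :=
      absorb_aux R sim hequiv p w1' w1 w2' (hequiv.symm hw1) hw1w2'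
    exact ⟨w2, c2, hxw2, hequiv.trans hw2 (hequiv.symm hc2w2'), ⟨w1', hzw1', hw1'c2⟩⟩

lemma relpow_rtg : ∀ n (a b : T), RelPow R n a b → Relation.ReflTransGen R a b := by
  intro n
  induction n with
  | zero => rintro a b rfl; exact .refl
  | succ n ih =>
    rintro a b ⟨c, hac, hcb⟩
    exact Relation.ReflTransGen.head hac (ih c b hcb)

lemma relpow_snoc : ∀ n (a b c : T), RelPow R n a b → R b c → RelPow R (n+1) a c := by
  intro n
  induction n with
  | zero => rintro a b c rfl h; exact ⟨c, h, rfl⟩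
  | succ n ih =>
    rintro a b c ⟨d, had, hdb⟩ hbc
    exact ⟨d, had, ih d b c hdb hbc⟩

lemma rtg_relpow : ∀ a b : T, Relation.ReflTransGen R a b → ∃ n, RelPow R n a b := by
  intro a b h
  induction h with
  | refl => exact ⟨0, rfl⟩
  | @tail b c _ hbc ih =>
    obtain ⟨n, hn⟩ := ih
    exact ⟨n+1, relpow_snoc R n _ b c hn hbc⟩
end Aux

/-- Let `S = ∼∘R` where `∼` is an equivalence and `R` `∼`-commutes on `∼`-classes.
Then `(S⁻¹)ᵖ ∘ ∼ ∘ Sⁿ ⊆ Sⁿ ∘ ∼ ∘ (S⁻¹)ᵖ` for all `p n`; in particular `S*` is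
`∼`-confluent on `∼`-classes. -/
theorem stmt11 {T : Type*} (R sim : T → T → Prop)
    (hequiv : Equivalence sim)
    (hcomm : ∀ x y y' z : T, R y x → sim y y' → R y' z →
      ∃ w w', R x w ∧ sim w w' ∧ R z w') :
    (∀ p n : ℕ, ∀ x y y' z : T,
      RelPow (Comp sim R) p y x → sim y y' → RelPow (Comp sim R) n y' z →
      ∃ w w', RelPow (Comp sim R) n x w ∧ sim w w' ∧ RelPow (Comp sim R) p z w') ∧
    (∀ x y y' z : T,
      Relation.ReflTransGen (Comp sim R) y x → sim y y' →
      Relation.ReflTransGen (Comp sim R) y' z →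
      ∃ w w', Relation.ReflTransGen (Comp sim R) x w ∧ sim w w' ∧
        Relation.ReflTransGen (Comp sim R) z w') := by
  refine ⟨main_aux R sim hequiv hcomm, ?_⟩
  intro x y y' z hyx hyy' hy'z
  obtain ⟨p, hp⟩ := rtg_relpow _ y x hyx
  obtain ⟨n, hn⟩ := rtg_relpow _ y' z hy'z
  obtain ⟨w, w', h1, h2, h3⟩ := main_aux R sim hequiv hcomm p n x y y' z hp hyy' hn
  exact ⟨w, w', relpow_rtg _ n x w h1, h2, relpow_rtg _ p z w' h3⟩
end

section
/- Let β, R, E be relations and ∼ the equivalence generated by a symmetric E, with ▷ = β ∪ (∼∘R) and → = β ∪ R ∪ E. If ∼ commutes with β (∼∘β ⊆ β∘∼) and ∼∘(∼∘R) ⊆ ∼∘R, then →* ⊆ ▷*∘∼: every derivation in the full relation → factors as a ▷-derivation followed by an ∼-equivalence. Consequently, the joinability relation ↓ for → equals ▷*∘∼∘(▷*)⁻¹. -/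
/-- With `∼ = E*` (`E` symmetric), `▷ = β ∪ (∼∘R)` and `→ = β ∪ R ∪ E`: if `∼`
commutes with `β` and `∼∘(∼∘R) ⊆ ∼∘R`, then `→* ⊆ ▷*∘∼`, and joinability for `→`
coincides with `▷*∘∼∘(▷*)⁻¹`. -/
theorem stmt13 {T : Type*} (β R E : T → T → Prop)
    (hsym : ∀ a b : T, E a b → E b a)
    (sim : T → T → Prop) (hsim : sim = Relation.ReflTransGen E)
    (rhd : T → T → Prop) (hrhd : ∀ a b : T, rhd a b ↔ β a b ∨ Comp sim R a b)
    (arr : T → T → Prop) (harr : ∀ a b : T, arr a b ↔ β a b ∨ R a b ∨ E a b)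
    (hcomm : ∀ t u v : T, sim t u → β u v → ∃ w, β t w ∧ sim w v)
    (habs : ∀ a b : T, Comp sim (Comp sim R) a b → Comp sim R a b) :
    (∀ t u : T, Relation.ReflTransGen arr t u →
      ∃ v, Relation.ReflTransGen rhd t v ∧ sim v u) ∧
    (∀ t u : T, (∃ w, Relation.ReflTransGen arr t w ∧ Relation.ReflTransGen arr u w) ↔
      (∃ t' u', Relation.ReflTransGen rhd t t' ∧ sim t' u' ∧
        Relation.ReflTransGen rhd u u')) := by
  subst hsim
  have simrefl : ∀ a : T, Relation.ReflTransGen E a a := fun _ => .refl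
  have simtrans : ∀ a b c : T, Relation.ReflTransGen E a b →
      Relation.ReflTransGen E b c → Relation.ReflTransGen E a c :=
    fun _ _ _ h1 h2 => h1.trans h2
  have simsymm : ∀ a b : T, Relation.ReflTransGen E a b → Relation.ReflTransGen E b a := by
    intro a b h
    induction h with
    | refl => exact Relation.ReflTransGen.refl
    | tail _ h ih =>
      exact (Relation.ReflTransGen.single (hsym _ _ h)).trans ih
  have main : ∀ t u : T, Relation.ReflTransGen arr t u →
      ∃ v, Relation.ReflTransGen rhd t v ∧ Relation.ReflTransGen E v u := by
    intro t u h
    induction h with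
    | refl => exact ⟨t, Relation.ReflTransGen.refl, simrefl t⟩
    | @tail b c _ hbc ih =>
      obtain ⟨v, hv, hvb⟩ := ih
      rcases (harr b c).mp hbc with hb | hr | he
      · obtain ⟨w, hw, hwc⟩ := hcomm v b c hvb hb
        exact ⟨w, hv.tail ((hrhd v w).mpr (Or.inl hw)), hwc⟩
      · exact ⟨c, hv.tail ((hrhd v c).mpr (Or.inr ⟨b, hvb, hr⟩)), simrefl c⟩
      · exact ⟨v, hv, simtrans _ _ _ hvb (Relation.ReflTransGen.single he)⟩
  refine ⟨main, fun t u => ⟨?_, ?_⟩⟩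
  · rintro ⟨w, htw, huw⟩
    obtain ⟨t', ht', ht'w⟩ := main t w htw
    obtain ⟨u', hu', hu'w⟩ := main u w huw
    exact ⟨t', u', ht', simtrans _ _ _ ht'w (simsymm _ _ hu'w), hu'⟩
  · rintro ⟨t', u', ht', hsimtu, hu'⟩
    have sub1 : ∀ a b : T, Relation.ReflTransGen E a b → Relation.ReflTransGen arr a b := by
      intro a b h
      exact Relation.ReflTransGen.mono (fun x y hxy => (harr x y).mpr (Or.inr (Or.inr hxy))) a b h
    have sub2 : ∀ a b : T, Relation.ReflTransGen rhd a b →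
        Relation.ReflTransGen arr a b := by
      intro a b h
      induction h with
      | refl => exact Relation.ReflTransGen.refl
      | tail _ h ih =>
        rcases (hrhd _ _).mp h with hb | ⟨c, hc, hr⟩
        · exact ih.tail ((harr _ _).mpr (Or.inl hb))
        · exact ih.trans ((sub1 _ _ hc).tail ((harr _ _).mpr (Or.inr (Or.inl hr))))
    exact ⟨u', (sub2 _ _ ht').trans (sub1 _ _ hsimtu), sub2 _ _ hu'⟩
end
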